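/- Let R be a commutative reduced ring with unity and I a proper ideal of R. Then I is a z⁰-ideal (i.e., a ∈ I implies P(a) ⊆ I, where P(a) is the intersection of all minimal prime ideals containing a) if and only if for all a, b ∈ R: Ann(a) = Ann(b) and b ∈ I imply a ∈ I. -/

import Mathlib

lemma exists_annihilator_of_mem_minimalPrime {R : Type*} [CommRing R] [IsReduced R]
    {Q : Ideal R} (hQ : Q ∈ minimalPrimes R) {b : R} (hb : b ∈ Q) :
    ∃ s ∉ Q, s * b = 0 := by
  haveI hQp : Q.IsPrime := hQ.1.1
  have hnil : IsNilpotent (algebraMap R (Localization Q.primeCompl) b) := by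
    have : Ring.KrullDimLE 0 (Localization.AtPrime Q) := .of_isLocalization _ hQ _
    rw [Ring.KrullDimLE.isNilpotent_iff_mem_maximalIdeal]
    exact (IsLocalization.AtPrime.to_map_mem_maximal_iff _ Q b).mpr hb
  obtain ⟨n, hn⟩ := hnil
  rw [← map_pow] at hn
  rw [IsLocalization.map_eq_zero_iff Q.primeCompl] at hn
  obtain ⟨⟨s, hs⟩, hsb⟩ := hn
  refine ⟨s, hs, ?_⟩
  have hz : (s * b) ^ (n + 1) = 0 := by
    have : (s * b) ^ (n + 1) = s ^ n * b * (s * b ^ n) := by ring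
    rw [this, hsb, mul_zero]
  exact IsNilpotent.eq_zero ⟨n + 1, hz⟩

/-- A proper ideal `I` of a commutative reduced ring is a z⁰-ideal
(`a ∈ I → P(a) ⊆ I`) iff `Ann(a) = Ann(b)` and `b ∈ I` imply `a ∈ I`. -/
theorem z0Ideal_iff_ann_eq
    {R : Type*} [CommRing R] [IsReduced R] (I : Ideal R) (hI : I ≠ ⊤) :
    (∀ a ∈ I, ∀ b : R, (∀ Q ∈ minimalPrimes R, a ∈ Q → b ∈ Q) → b ∈ I) ↔
      (∀ a b : R, {r : R | r * a = 0} = {r : R | r * b = 0} → b ∈ I → a ∈ I) := by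
  constructor
  · intro h a b hann hb
    refine h b hb a ?_
    intro Q hQ hbQ
    haveI : Q.IsPrime := hQ.1.1
    obtain ⟨s, hs, hsb⟩ := exists_annihilator_of_mem_minimalPrime hQ hbQ
    have hsa : s * a = 0 := by
      have : s ∈ {r : R | r * b = 0} := hsb
      rw [← hann] at this
      exact this
    rcases Ideal.IsPrime.mem_or_mem ‹Q.IsPrime› (hsa ▸ Q.zero_mem) with h' | h'
    · exact absurd h' hs
    · exact h'
  · intro h a ha b hQab
    refine h b (a * b) ?_ (Ideal.mul_mem_right b I ha)
    ext r
    simp only [Set.mem_setOf_eq]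
    constructor
    · intro hr
      calc r * (a * b) = a * (r * b) := by ring
        _ = 0 := by rw [hr, mul_zero]
    · intro hr
      have hmem : ∀ Q ∈ minimalPrimes R, r * b ∈ Q := by
        intro Q hQ
        haveI : Q.IsPrime := hQ.1.1
        by_cases haQ : a ∈ Q
        · exact Ideal.mul_mem_left Q r (hQab Q hQ haQ)
        · have : r * b * a ∈ Q := by
            have : r * b * a = r * (a * b) := by ring
            rw [this, hr]; exact Q.zero_mem
          rcases Ideal.IsPrime.mem_or_mem ‹Q.IsPrime› this with h' | h'
          · exact h'
          · exact absurd h' haQ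
      have : r * b ∈ sInf (minimalPrimes R) := Ideal.mem_sInf.mpr fun {J} hq => hmem J hq
      rw [show minimalPrimes R = (⊥ : Ideal R).minimalPrimes from rfl,
        Ideal.sInf_minimalPrimes] at this
      simpa using (IsReduced.eq_zero _ ⟨_, Ideal.mem_radical_iff.mp this |>.choose_spec⟩)
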